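/- Let H be a connected finite simple graph on n vertices whose girth is finite, and let k satisfy girth(H) ≤ k ≤ n. Then there exists a set B of k arcs of the transformer digraph G_H with unreach(B) ≥ 2k. -/

import Mathlib

open SimpleGraph

/-- `eCount H S` is the number of edges of `H` with both endpoints in `S`. -/
noncomputable def eCount {V : Type*} (H : SimpleGraph V) (S : Finset V) : ℕ :=
  {e : H.edgeSet | ∀ v ∈ (e : Sym2 V), v ∈ S}.ncard

/-- Vertices of the transformer digraph `G_H`: `none` is the node `z`, `some (Sum.inl v)` is the
node `x_v` for a vertex `v` of `H`, and `some (Sum.inr e)` is the node `y_e` for an edge `e`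
of `H`. -/
abbrev TVert {V : Type*} (H : SimpleGraph V) : Type _ := Option (V ⊕ ↥H.edgeSet)

/-- Arcs of the transformer digraph: `z → x_v` for every vertex `v`, and `x_v → y_e` whenever
`v` is an endpoint of the edge `e`. -/
def arc {V : Type*} (H : SimpleGraph V) : TVert H → TVert H → Prop
  | none, some (Sum.inl _) => True
  | some (Sum.inl v), some (Sum.inr e) => v ∈ (e : Sym2 V)
  | _, _ => False

/-- `unreach H B` is the number of vertices of the transformer digraph that are not reachable
from `z` by a directed path using only arcs outside the blocked set `B`. -/
noncomputable def unreach {V : Type*} (H : SimpleGraph V)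
    (B : Set (TVert H × TVert H)) : ℕ :=
  {w : TVert H | ¬ Relation.ReflTransGen (fun a b => arc H a b ∧ (a, b) ∉ B) none w}.ncard

section Aux

variable {V : Type*} [Fintype V] {H : SimpleGraph V}

lemma aux_finite_edgeSet : Finite (↥H.edgeSet) := by
  classical
  infer_instance

lemma aux_finite_tvert : Finite (TVert H) := by
  classical
  infer_instance

/-- crossing a walk from inside `S` to outside `S` gives an adjacent pair across the boundary -/
lemma aux_cross {S : Finset V} :
    ∀ {a b : V} (_ : H.Walk a b), a ∈ S → b ∉ S → ∃ u ∈ S, ∃ v, v ∉ S ∧ H.Adj u v := by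
  intro a b w
  induction w with
  | nil => intro h1 h2; exact absurd h1 h2
  | @cons x y z h p ih =>
    intro ha hb
    by_cases hy : y ∈ S
    · exact ih hy hb
    · exact ⟨x, ha, y, hy, h⟩

lemma aux_grow (hconn : H.Connected) (S : Finset V) (hne : S.Nonempty)
    (hlt : S.card < Fintype.card V) : ∃ u ∈ S, ∃ v, v ∉ S ∧ H.Adj u v := by
  classical
  have hvex : ∃ v, v ∉ S := by
    by_contra h
    push_neg at h
    have : S = Finset.univ := Finset.eq_univ_iff_forall.2 h
    rw [this, Finset.card_univ] at hlt
    exact lt_irrefl _ hlt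
  obtain ⟨v, hv⟩ := hvex
  obtain ⟨u₀, hu₀⟩ := hne
  obtain ⟨w⟩ := hconn u₀ v
  exact aux_cross w hu₀ hv

lemma aux_eCount_insert [DecidableEq V] {S : Finset V} {u v : V} (hu : u ∈ S) (hv : v ∉ S)
    (hadj : H.Adj u v) : eCount H S + 1 ≤ eCount H (insert v S) := by
  classical
  haveI := (aux_finite_edgeSet (H := H))
  set A : Set (↥H.edgeSet) := {e : H.edgeSet | ∀ w ∈ (e : Sym2 V), w ∈ S} with hA
  set A' : Set (↥H.edgeSet) := {e : H.edgeSet | ∀ w ∈ (e : Sym2 V), w ∈ insert v S} with hA'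
  have hsub : A ⊆ A' := fun e he w hw => Finset.mem_insert_of_mem (he w hw)
  have he₀mem : s(u, v) ∈ H.edgeSet := H.mem_edgeSet.2 hadj
  set e₀ : ↥H.edgeSet := ⟨s(u, v), he₀mem⟩ with he₀
  have he₀' : e₀ ∈ A' := by
    intro w hw
    rw [he₀] at hw
    simp only [Sym2.mem_iff] at hw
    rcases hw with rfl | rfl
    · exact Finset.mem_insert_of_mem hu
    · exact Finset.mem_insert_self _ _
  have he₀n : e₀ ∉ A := by
    intro h
    exact hv (h v (by rw [he₀]; simp))
  have hss : A ⊂ A' := ⟨hsub, fun hsub' => he₀n (hsub' he₀')⟩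
  have := Set.ncard_lt_ncard hss (Set.toFinite A')
  simpa [eCount, hA, hA'] using this

lemma aux_exists_base (hg2 : H.egirth ≠ ⊤) :
    ∃ (g : ℕ) (S : Finset V), H.egirth = (g : ℕ∞) ∧ S.Nonempty ∧ S.card = g ∧
      g ≤ eCount H S := by
  classical
  haveI := (aux_finite_edgeSet (H := H))
  have hnac : ¬ H.IsAcyclic := by
    rw [← SimpleGraph.egirth_eq_top] at *
    exact hg2
  obtain ⟨a, w, hcyc, hlen⟩ := SimpleGraph.exists_egirth_eq_length.2 hnac
  refine ⟨w.length, w.support.tail.toFinset, hlen, ?_, ?_, ?_⟩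
  · -- nonempty : a ∈ support.tail
    have hnil : ¬ w.Nil := hcyc.not_nil
    have : a ∈ w.support.tail := by
      rw [← SimpleGraph.Walk.support_tail_of_not_nil w hnil]
      exact SimpleGraph.Walk.end_mem_support _
    exact ⟨a, List.mem_toFinset.2 this⟩
  · -- card
    rw [List.toFinset_card_of_nodup hcyc.support_nodup]
    have := SimpleGraph.Walk.length_support w
    rw [List.length_tail, this]
    simp
  · -- g ≤ eCount
    have hsupp : ∀ x, x ∈ w.support → x ∈ w.support.tail.toFinset := by
      intro x hx
      rw [SimpleGraph.Walk.support_eq_cons] at hx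
      rcases List.mem_cons.1 hx with rfl | hx
      · have hnil : ¬ w.Nil := hcyc.not_nil
        refine List.mem_toFinset.2 ?_
        rw [← SimpleGraph.Walk.support_tail_of_not_nil w hnil]
        exact SimpleGraph.Walk.end_mem_support _
      · exact List.mem_toFinset.2 hx
    set A : Set (↥H.edgeSet) :=
      {e : H.edgeSet | ∀ v ∈ (e : Sym2 V), v ∈ w.support.tail.toFinset} with hA
    set T : Set (↥H.edgeSet) := {e : H.edgeSet | (e : Sym2 V) ∈ w.edges} with hT
    have hTA : T ⊆ A := by
      rintro ⟨e, he⟩ hmem v hv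
      apply hsupp
      induction e using Sym2.ind with
      | _ x y =>
        rcases Sym2.mem_iff.1 hv with rfl | rfl
        · exact w.fst_mem_support_of_mem_edges hmem
        · exact w.snd_mem_support_of_mem_edges hmem
    have hval : Subtype.val '' T = {e : Sym2 V | e ∈ w.edges} := by
      ext e
      constructor
      · rintro ⟨⟨e', he'⟩, hmem, rfl⟩
        exact hmem
      · intro he
        exact ⟨⟨e, w.edges_subset_edgeSet he⟩, he, rfl⟩
    have hTcard : T.ncard = w.length := by
      have h1 : T.ncard = (Subtype.val '' T).ncard :=
        (Set.ncard_image_of_injective T Subtype.val_injective).symm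
      rw [h1, hval]
      have : {e : Sym2 V | e ∈ w.edges} = ↑w.edges.toFinset := by
        ext e; simp
      rw [this, Set.ncard_coe_finset,
        List.toFinset_card_of_nodup hcyc.isTrail.edges_nodup, SimpleGraph.Walk.length_edges]
    calc w.length = T.ncard := hTcard.symm
      _ ≤ A.ncard := Set.ncard_le_ncard hTA (Set.toFinite A)
      _ = eCount H _ := rfl

lemma aux_exists_good [DecidableEq V] (hconn : H.Connected) (g : ℕ) (S₀ : Finset V)
    (hS₀ne : S₀.Nonempty) (hS₀card : S₀.card = g) (hS₀e : g ≤ eCount H S₀) :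
    ∀ k, g ≤ k → k ≤ Fintype.card V →
      ∃ S : Finset V, S.Nonempty ∧ S.card = k ∧ k ≤ eCount H S := by
  classical
  intro k hgk
  induction k, hgk using Nat.le_induction with
  | base => exact fun _ => ⟨S₀, hS₀ne, hS₀card, hS₀e⟩
  | succ k hk ih =>
    intro hk1
    obtain ⟨S, hne, hcard, he⟩ := ih (Nat.le_of_succ_le hk1)
    obtain ⟨u, hu, v, hv, hadj⟩ := aux_grow hconn S hne (by omega)
    refine ⟨insert v S, ⟨u, Finset.mem_insert_of_mem hu⟩, ?_, ?_⟩
    · rw [Finset.card_insert_of_notMem hv, hcard]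
    · calc k + 1 ≤ eCount H S + 1 := by omega
        _ ≤ eCount H (insert v S) := aux_eCount_insert hu hv hadj

lemma aux_unreach (S : Finset V) (B : Finset (TVert H × TVert H))
    (hBS : ∀ v ∈ S, ((none : TVert H), some (Sum.inl v)) ∈ B) :
    S.card + eCount H S ≤ unreach H ↑B := by
  classical
  haveI := (aux_finite_tvert (H := H))
  set R : TVert H → TVert H → Prop :=
    fun a b => arc H a b ∧ (a, b) ∉ (↑B : Set (TVert H × TVert H)) with hR
  have claim1 : ∀ v ∈ S, ¬ Relation.ReflTransGen R none (some (Sum.inl v)) := by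
    intro v hv h
    rcases Relation.ReflTransGen.cases_tail h with heq | ⟨c, _, hstep⟩
    · cases heq
    · match c, hstep with
      | none, hstep =>
        exact hstep.2 (hBS v hv)
      | some (Sum.inl _), hstep => exact hstep.1
      | some (Sum.inr _), hstep => exact hstep.1
  have claim2 : ∀ e : ↥H.edgeSet, (∀ v ∈ (e : Sym2 V), v ∈ S) →
      ¬ Relation.ReflTransGen R none (some (Sum.inr e)) := by
    intro e he h
    rcases Relation.ReflTransGen.cases_tail h with heq | ⟨c, hpre, hstep⟩
    · cases heq
    · match c, hstep, hpre with
      | none, hstep, _ => exact hstep.1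
      | some (Sum.inl x), hstep, hpre =>
        exact claim1 x (he x hstep.1) hpre
      | some (Sum.inr _), hstep, _ => exact hstep.1
  set U1 : Set (TVert H) := (fun v => (some (Sum.inl v) : TVert H)) '' ↑S with hU1
  set U2 : Set (TVert H) :=
    (fun e => (some (Sum.inr e) : TVert H)) '' {e : H.edgeSet | ∀ v ∈ (e : Sym2 V), v ∈ S}
    with hU2
  have hsub : U1 ∪ U2 ⊆ {w : TVert H | ¬ Relation.ReflTransGen R none w} := by
    rintro w (⟨v, hv, rfl⟩ | ⟨e, he, rfl⟩)
    · exact claim1 v hv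
    · exact claim2 e he
  have hdisj : Disjoint U1 U2 := by
    rw [Set.disjoint_left]
    rintro w ⟨v, hv, rfl⟩ ⟨e, he, heq⟩
    simp at heq
  have hU1card : U1.ncard = S.card := by
    rw [hU1, Set.ncard_image_of_injective _ (fun a b h => Sum.inl.inj (Option.some.inj h)),
      Set.ncard_coe_finset]
  have hU2card : U2.ncard = eCount H S := by
    rw [hU2, Set.ncard_image_of_injective _ (fun a b h => Sum.inr.inj (Option.some.inj h))]
    rfl
  have hcard : (U1 ∪ U2).ncard = S.card + eCount H S := by
    rw [Set.ncard_union_eq hdisj (Set.toFinite U1) (Set.toFinite U2), hU1card, hU2card]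
  rw [← hcard]
  exact Set.ncard_le_ncard hsub (Set.toFinite _)

end Aux

/-- If `H` is connected on `n` vertices with finite girth and
`girth(H) ≤ k ≤ n`, then some set `B` of `k` arcs of the transformer digraph has
`unreach(B) ≥ 2k`. -/
theorem stmt9 {V : Type*} [Fintype V] (H : SimpleGraph V) (hconn : H.Connected)
    (hfin : H.egirth ≠ ⊤) (k : ℕ) (hg : H.egirth ≤ (k : ℕ∞)) (hkn : k ≤ Fintype.card V) :
    ∃ B : Finset (TVert H × TVert H),
      (∀ p ∈ B, arc H p.1 p.2) ∧ B.card = k ∧ 2 * k ≤ unreach H ↑B := by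
  classical
  obtain ⟨g, S₀, hgeq, hS₀ne, hS₀card, hS₀e⟩ := aux_exists_base hfin
  have hgk : g ≤ k := by
    rw [hgeq] at hg
    exact_mod_cast hg
  obtain ⟨S, hne, hcard, he⟩ := aux_exists_good hconn g S₀ hS₀ne hS₀card hS₀e k hgk hkn
  set B : Finset (TVert H × TVert H) :=
    S.image fun v => ((none : TVert H), some (Sum.inl v)) with hBdef
  have hinj : Function.Injective fun v : V => ((none : TVert H), (some (Sum.inl v) : TVert H)) := by
    intro a b h
    have := congrArg Prod.snd h
    simp only at this
    exact Sum.inl.inj (Option.some.inj this)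
  refine ⟨B, ?_, ?_, ?_⟩
  · intro p hp
    rw [hBdef, Finset.mem_image] at hp
    obtain ⟨v, _, rfl⟩ := hp
    trivial
  · rw [hBdef, Finset.card_image_of_injective _ hinj, hcard]
  · have h1 : S.card + eCount H S ≤ unreach H ↑B :=
      aux_unreach S B (fun v hv => hBdef ▸ Finset.mem_image_of_mem _ hv)
    omega
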